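/- Let m, n be positive integers, let W be a fixed real m×n matrix, let α > 0 and γ > 0, and let x be a random vector in ℝⁿ whose coordinates are independent standard Gaussian random variables. Set y = γ · W · (αIₙ + WᵀW)^{-1/2} · x. Then E[‖y‖²] = γ² · (m − α · tr((αIₘ + WWᵀ)⁻¹)). -/

import Mathlib

open Matrix MeasureTheory ProbabilityTheory

open Real
open scoped ENNReal NNReal


lemma pdf01 : gaussianPDFReal 0 1 = fun x : ℝ => (Real.sqrt (2 * π))⁻¹ * Real.exp (-(2⁻¹) * x ^ 2) := by
  ext x
  simp only [gaussianPDFReal, NNReal.coe_one, mul_one, sub_zero]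
  ring_nf

lemma integral_gauss01 (g : ℝ → ℝ) :
    ∫ x, g x ∂(gaussianReal 0 1) = ∫ x, gaussianPDFReal 0 1 x * g x := by
  rw [gaussianReal_of_var_ne_zero 0 one_ne_zero]
  have h : (gaussianPDF 0 1) = fun x => ((gaussianPDFReal 0 1 x).toNNReal : ℝ≥0∞) := rfl
  rw [h, integral_withDensity_eq_integral_smul
    (measurable_gaussianPDFReal 0 1).real_toNNReal g]
  congr 1 with x
  simp [NNReal.smul_def, Real.coe_toNNReal _ (gaussianPDFReal_nonneg 0 1 x)]

lemma integrable_gauss01 (g : ℝ → ℝ)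
    (h : Integrable (fun x => gaussianPDFReal 0 1 x * g x)) :
    Integrable g (gaussianReal 0 1) := by
  rw [gaussianReal_of_var_ne_zero 0 one_ne_zero]
  have hh : (gaussianPDF 0 1) = fun x => ((gaussianPDFReal 0 1 x).toNNReal : ℝ≥0∞) := rfl
  rw [hh, integrable_withDensity_iff_integrable_smul
    (measurable_gaussianPDFReal 0 1).real_toNNReal]
  refine h.congr (Filter.Eventually.of_forall fun x => ?_)
  simp [NNReal.smul_def, Real.coe_toNNReal _ (gaussianPDFReal_nonneg 0 1 x)]

lemma integrable_id_gauss : Integrable (fun x : ℝ => x) (gaussianReal 0 1) := by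
  apply integrable_gauss01
  rw [pdf01]
  have := (integrable_mul_exp_neg_mul_sq (b := 2⁻¹) (by norm_num)).const_mul (Real.sqrt (2 * π))⁻¹
  refine this.congr (Filter.Eventually.of_forall fun x => ?_)
  ring

lemma integrable_sq_gauss : Integrable (fun x : ℝ => x ^ 2) (gaussianReal 0 1) := by
  apply integrable_gauss01
  rw [pdf01]
  have h2 := (integrable_rpow_mul_exp_neg_mul_sq (b := 2⁻¹) (by norm_num)
    (s := 2) (by norm_num)).const_mul (Real.sqrt (2 * π))⁻¹
  have hrp : ∀ y : ℝ, y ^ (2 : ℝ) = y ^ 2 := fun y => by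
    rw [show (2 : ℝ) = ((2 : ℕ) : ℝ) by norm_num, Real.rpow_natCast]
  simp_rw [hrp] at h2
  refine h2.congr (Filter.Eventually.of_forall fun x => ?_)
  ring

lemma mean_gauss : ∫ x, x ∂(gaussianReal 0 1) = 0 := by
  rw [integral_gauss01]
  set f : ℝ → ℝ := fun x => gaussianPDFReal 0 1 x * x with hf
  have hodd : ∀ x, f (-x) = - f x := by
    intro x
    simp only [hf, pdf01]
    ring
  have hcomp : ∫ x, f (-x) = ∫ x, f x :=
    (Measure.measurePreserving_neg (volume : Measure ℝ)).integral_comp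
      (Homeomorph.neg ℝ).measurableEmbedding f
  simp_rw [hodd] at hcomp
  rw [integral_neg] at hcomp
  linarith

lemma sq_moment_gauss : ∫ x, x ^ 2 ∂(gaussianReal 0 1) = 1 := by
  rw [integral_gauss01, pdf01]
  have h1 : ∫ x : ℝ, (Real.sqrt (2 * π))⁻¹ * Real.exp (-(2⁻¹) * x ^ 2) * x ^ 2
      = (Real.sqrt (2 * π))⁻¹ * ∫ x : ℝ, x ^ 2 * Real.exp (-(2⁻¹) * x ^ 2) := by
    rw [← integral_const_mul]
    congr 1 with x
    ring
  rw [h1]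
  have h2 : ∫ x : ℝ, x ^ 2 * Real.exp (-(2⁻¹) * x ^ 2)
      = 2 * ∫ x in Set.Ioi (0:ℝ), x ^ 2 * Real.exp (-(2⁻¹) * x ^ 2) := by
    rw [← integral_comp_abs (f := fun x : ℝ => x ^ 2 * Real.exp (-(2⁻¹) * x ^ 2))]
    congr 1 with x
    simp [sq_abs]
  rw [h2]
  have h3 : ∫ x in Set.Ioi (0:ℝ), x ^ 2 * Real.exp (-(2⁻¹) * x ^ 2)
      = (2⁻¹ : ℝ) ^ (-(((2:ℝ) + 1)) / 2) * (1 / 2) * Real.Gamma (((2:ℝ) + 1) / 2) := by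
    rw [← integral_rpow_mul_exp_neg_mul_rpow (p := 2) (q := 2) (b := 2⁻¹)
      (by norm_num) (by norm_num) (by norm_num)]
    refine setIntegral_congr_fun measurableSet_Ioi fun x hx => ?_
    have hrp : ∀ y : ℝ, y ^ (2 : ℝ) = y ^ 2 := fun y => by
      rw [show (2 : ℝ) = ((2 : ℕ) : ℝ) by norm_num, Real.rpow_natCast]
    simp only [hrp]
  rw [h3]
  have hG : Real.Gamma (((2:ℝ) + 1) / 2) = 2⁻¹ * Real.sqrt π := by
    have : ((2:ℝ) + 1) / 2 = 2⁻¹ + 1 := by norm_num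
    rw [this, Real.Gamma_add_one (by norm_num), show (2⁻¹ : ℝ) = 1/2 by norm_num,
      Real.Gamma_one_half_eq]
  rw [hG]
  have hpow : (2⁻¹ : ℝ) ^ (-(((2:ℝ) + 1)) / 2) = 2 * Real.sqrt 2 := by
    rw [show (-(((2:ℝ) + 1)) / 2) = -(3/2 : ℝ) by norm_num,
      Real.rpow_neg (by norm_num), Real.inv_rpow (by norm_num), inv_inv,
      show (3/2 : ℝ) = 1 + 1/2 by norm_num, Real.rpow_add (by norm_num),
      Real.rpow_one, ← Real.sqrt_eq_rpow]
  rw [hpow]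
  rw [Real.sqrt_mul (by norm_num) π]
  have hs2 : Real.sqrt 2 > 0 := Real.sqrt_pos.mpr (by norm_num)
  have hsp : Real.sqrt π > 0 := Real.sqrt_pos.mpr Real.pi_pos
  field_simp

section Pi

variable (n : ℕ)

lemma gauss_prod_aux (j k : Fin n) (x : Fin n → ℝ) :
    (∏ i : Fin n, ((if i = j then x i else 1) * (if i = k then x i else 1))) = x j * x k := by
  rw [Finset.prod_mul_distrib]
  congr 1 <;> simp

lemma integrable_coord_prod (j k : Fin n) :
    Integrable (fun x : Fin n → ℝ => x j * x k)
      (Measure.pi fun _ : Fin n => gaussianReal 0 1) := by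
  letI : MeasureSpace ℝ := ⟨gaussianReal 0 1⟩
  haveI : IsProbabilityMeasure (volume : Measure ℝ) :=
    inferInstanceAs (IsProbabilityMeasure (gaussianReal 0 1))
  have key : Integrable (fun x : Fin n → ℝ =>
      ∏ i : Fin n, ((if i = j then x i else 1) * (if i = k then x i else 1))) volume := by
    apply Integrable.fintype_prod (f := fun i t => (if i = j then t else 1) * (if i = k then t else 1))
    intro i
    rcases eq_or_ne i j with hij | hij <;> rcases eq_or_ne i k with hik | hik
    · subst hij; subst hik
      simp only [if_pos rfl]
      have h := integrable_sq_gauss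
      simp only [sq] at h
      exact h
    · subst hij
      simp only [if_pos rfl, if_neg hik, mul_one]
      exact integrable_id_gauss
    · subst hik
      simp only [if_pos rfl, if_neg hij, one_mul]
      exact integrable_id_gauss
    · simp only [if_neg hij, if_neg hik, mul_one]
      exact integrable_const 1
  have hvol : (volume : Measure (Fin n → ℝ)) = Measure.pi fun _ : Fin n => gaussianReal 0 1 := rfl
  rw [← hvol]
  exact key.congr (Filter.Eventually.of_forall fun x => gauss_prod_aux n j k x)

lemma integral_coord_prod (j k : Fin n) :
    ∫ x : Fin n → ℝ, x j * x k ∂(Measure.pi fun _ : Fin n => gaussianReal 0 1)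
      = if j = k then 1 else 0 := by
  letI : MeasureSpace ℝ := ⟨gaussianReal 0 1⟩
  haveI : IsProbabilityMeasure (volume : Measure ℝ) :=
    inferInstanceAs (IsProbabilityMeasure (gaussianReal 0 1))
  have hvol : (volume : Measure (Fin n → ℝ)) = Measure.pi fun _ : Fin n => gaussianReal 0 1 := rfl
  rw [← hvol]
  have : ∫ x : Fin n → ℝ, x j * x k
      = ∫ x : Fin n → ℝ, ∏ i : Fin n, ((if i = j then x i else 1) * (if i = k then x i else 1)) := by
    congr 1 with x
    rw [gauss_prod_aux]
  rw [this, integral_fintype_prod_volume_eq_prod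
    (f := fun i t => (if i = j then t else 1) * (if i = k then t else 1))]
  have hval : ∀ i : Fin n, (∫ t : ℝ, (if i = j then t else 1) * (if i = k then t else 1))
      = if i = j then (if i = k then (1:ℝ) else 0) else (if i = k then 0 else 1) := by
    intro i
    rcases eq_or_ne i j with hij | hij <;> rcases eq_or_ne i k with hik | hik
    · subst hij; subst hik
      simp only [if_pos rfl]
      have h := sq_moment_gauss
      simp only [sq] at h
      exact h
    · subst hij
      simp only [if_pos rfl, if_neg hik, mul_one]
      exact mean_gauss
    · subst hik
      simp only [if_pos rfl, if_neg hij, one_mul]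
      exact mean_gauss
    · simp only [if_neg hij, if_neg hik, mul_one]
      simp
  simp_rw [hval]
  rcases eq_or_ne j k with hjk | hjk
  · subst hjk
    rw [if_pos rfl]
    exact Finset.prod_eq_one fun i _ => by by_cases h : i = j <;> simp [h]
  · rw [if_neg hjk]
    refine Finset.prod_eq_zero (Finset.mem_univ j) ?_
    simp [hjk]

end Pi

lemma trace_alg (m n : ℕ) (W : Matrix (Fin m) (Fin n) ℝ) (α : ℝ) (hα : 0 < α)
    (R : Matrix (Fin n) (Fin n) ℝ) (hR : R.PosDef)
    (hRsq : R * R = α • (1 : Matrix (Fin n) (Fin n) ℝ) + Wᵀ * W) :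
    ∑ j : Fin n, ∑ i : Fin m, (W * R⁻¹) i j * (W * R⁻¹) i j
      = (m : ℝ) - α * ((α • (1 : Matrix (Fin m) (Fin m) ℝ) + W * Wᵀ)⁻¹).trace := by
  set S : Matrix (Fin n) (Fin n) ℝ := α • 1 + Wᵀ * W with hS
  set T : Matrix (Fin m) (Fin m) ℝ := α • 1 + W * Wᵀ with hT
  have hSd : IsUnit S.det := by
    rw [← hRsq, Matrix.det_mul]
    exact ((mul_pos hR.det_pos hR.det_pos).ne').isUnit
  have hTpd : T.PosDef := by
    have h1 : (α • (1 : Matrix (Fin m) (Fin m) ℝ)).PosDef := by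
      have heq : (α • (1 : Matrix (Fin m) (Fin m) ℝ)) = Matrix.diagonal (fun _ => α) := by
        ext i j
        by_cases h : i = j <;> simp [h, Matrix.one_apply, Matrix.diagonal_apply]
      rw [heq]
      exact Matrix.PosDef.diagonal (fun _ => hα)
    have h2 : (W * Wᵀ).PosSemidef := by
      have := Matrix.posSemidef_conjTranspose_mul_self Wᵀ
      simpa [Matrix.conjTranspose_eq_transpose_of_trivial] using this
    exact h1.add_posSemidef h2
  have hTd : IsUnit T.det := hTpd.det_pos.ne'.isUnit
  have hWS : W * S⁻¹ = T⁻¹ * W := by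
    have hcomm : T * W = W * S := by
      rw [hS, hT, Matrix.add_mul, Matrix.mul_add, Matrix.smul_mul, Matrix.mul_smul,
        Matrix.one_mul, Matrix.mul_one, Matrix.mul_assoc]
    have h := congrArg (fun M => T⁻¹ * M * S⁻¹) hcomm
    rw [← Matrix.mul_assoc, Matrix.nonsing_inv_mul _ hTd, Matrix.one_mul] at h
    rwa [Matrix.mul_assoc T⁻¹ (W * S) S⁻¹, Matrix.mul_assoc W S S⁻¹,
      Matrix.mul_nonsing_inv _ hSd, Matrix.mul_one] at h
  have hRinv : R⁻¹ * R⁻¹ = S⁻¹ := by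
    rw [← hRsq, Matrix.mul_inv_rev]
  have hRtinv : (R⁻¹)ᵀ = R⁻¹ := by
    rw [Matrix.transpose_nonsing_inv]
    congr 1
    have := hR.isHermitian
    rwa [Matrix.IsHermitian, Matrix.conjTranspose_eq_transpose_of_trivial] at this
  have hsum : ∑ j : Fin n, ∑ i : Fin m, (W * R⁻¹) i j * (W * R⁻¹) i j
      = ((W * R⁻¹)ᵀ * (W * R⁻¹)).trace := by
    simp only [Matrix.trace, Matrix.mul_apply, Matrix.diag, Matrix.transpose_apply]
  rw [hsum]
  have htr : ((W * R⁻¹)ᵀ * (W * R⁻¹)).trace = (T⁻¹ * (W * Wᵀ)).trace := by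
    rw [Matrix.transpose_mul, hRtinv]
    calc (R⁻¹ * Wᵀ * (W * R⁻¹)).trace
        = (R⁻¹ * (Wᵀ * (W * R⁻¹))).trace := by rw [Matrix.mul_assoc]
      _ = ((Wᵀ * (W * R⁻¹)) * R⁻¹).trace := Matrix.trace_mul_comm _ _
      _ = (Wᵀ * (W * (R⁻¹ * R⁻¹))).trace := by
          simp only [Matrix.mul_assoc]
      _ = (Wᵀ * (W * S⁻¹)).trace := by rw [hRinv]
      _ = (Wᵀ * (T⁻¹ * W)).trace := by rw [hWS]
      _ = ((T⁻¹ * W) * Wᵀ).trace := Matrix.trace_mul_comm _ _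
      _ = (T⁻¹ * (W * Wᵀ)).trace := by rw [Matrix.mul_assoc]
  rw [htr]
  have hWWt : W * Wᵀ = T - α • 1 := by
    rw [hT]
    abel
  rw [hWWt, Matrix.mul_sub, Matrix.trace_sub, Matrix.nonsing_inv_mul _ hTd,
    Matrix.mul_smul, Matrix.mul_one, Matrix.trace_smul, Matrix.trace_one]
  simp [smul_eq_mul]

/-- Let `W` be a fixed real `m × n` matrix, `α, γ > 0`, and let `x` be a
random vector in `ℝⁿ` with independent standard Gaussian coordinates. With
`y = γ • W * R⁻¹ • x`, where `R` is the (unique) positive-definite square root of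
`α Iₙ + Wᵀ W`, one has `E[‖y‖²] = γ² (m - α tr ((α Iₘ + W Wᵀ)⁻¹))`, where
`‖y‖² = ∑ i, y i ^ 2` is the squared Euclidean norm. -/
theorem stmt_7 (m n : ℕ) (hm : 0 < m) (hn : 0 < n)
    (W : Matrix (Fin m) (Fin n) ℝ) (α γ : ℝ) (hα : 0 < α) (hγ : 0 < γ)
    (R : Matrix (Fin n) (Fin n) ℝ) (hR : R.PosDef)
    (hRsq : R * R = α • (1 : Matrix (Fin n) (Fin n) ℝ) + Wᵀ * W) :
    ∫ x : Fin n → ℝ, (∑ i : Fin m, ((γ • (W * R⁻¹)).mulVec x i) ^ 2)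
        ∂(Measure.pi fun _ : Fin n => gaussianReal 0 1) =
      γ ^ 2 * ((m : ℝ) - α * ((α • (1 : Matrix (Fin m) (Fin m) ℝ) + W * Wᵀ)⁻¹).trace) := by
  set μn := Measure.pi fun _ : Fin n => gaussianReal 0 1 with hμn
  set A : Matrix (Fin m) (Fin n) ℝ := γ • (W * R⁻¹) with hA
  have h1 : ∀ x : Fin n → ℝ, (∑ i : Fin m, (A.mulVec x) i ^ 2)
      = ∑ j : Fin n, ∑ k : Fin n, (∑ i : Fin m, A i j * A i k) * (x j * x k) := by
    intro x
    calc ∑ i : Fin m, (A.mulVec x) i ^ 2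
        = ∑ i : Fin m, ∑ j : Fin n, ∑ k : Fin n, (A i j * A i k) * (x j * x k) := by
          refine Finset.sum_congr rfl fun i _ => ?_
          have : (A.mulVec x) i = ∑ j : Fin n, A i j * x j := rfl
          rw [this, sq, Finset.sum_mul_sum]
          exact Finset.sum_congr rfl fun j _ => Finset.sum_congr rfl fun k _ => by ring
      _ = ∑ j : Fin n, ∑ k : Fin n, (∑ i : Fin m, A i j * A i k) * (x j * x k) := by
          rw [Finset.sum_comm]
          refine Finset.sum_congr rfl fun j _ => ?_
          rw [Finset.sum_comm]
          refine Finset.sum_congr rfl fun k _ => ?_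
          rw [Finset.sum_mul]
  simp_rw [h1]
  rw [MeasureTheory.integral_finset_sum _ (fun j _ =>
    MeasureTheory.integrable_finset_sum _ (fun k _ =>
      (integrable_coord_prod n j k).const_mul _))]
  have h2 : ∀ j : Fin n, ∫ x : Fin n → ℝ,
      (∑ k : Fin n, (∑ i : Fin m, A i j * A i k) * (x j * x k)) ∂μn
      = ∑ k : Fin n, (∑ i : Fin m, A i j * A i k) * (if j = k then 1 else 0) := by
    intro j
    rw [MeasureTheory.integral_finset_sum _ (fun k _ =>
      (integrable_coord_prod n j k).const_mul _)]
    refine Finset.sum_congr rfl fun k _ => ?_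
    rw [MeasureTheory.integral_const_mul, integral_coord_prod]
  rw [Finset.sum_congr rfl fun j _ => h2 j]
  have h3 : ∀ j : Fin n, ∑ k : Fin n, (∑ i : Fin m, A i j * A i k) * (if j = k then 1 else 0)
      = ∑ i : Fin m, A i j * A i j := by
    intro j
    simp [mul_ite, mul_one, mul_zero, Finset.sum_ite_eq]
  rw [Finset.sum_congr rfl fun j _ => h3 j]
  have h4 : ∑ j : Fin n, ∑ i : Fin m, A i j * A i j
      = γ ^ 2 * ∑ j : Fin n, ∑ i : Fin m, (W * R⁻¹) i j * (W * R⁻¹) i j := by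
    rw [Finset.mul_sum]
    refine Finset.sum_congr rfl fun j _ => ?_
    rw [Finset.mul_sum]
    refine Finset.sum_congr rfl fun i _ => ?_
    rw [hA]
    simp only [Matrix.smul_apply, smul_eq_mul]
    ring
  rw [h4, trace_alg m n W α hα R hR hRsq]
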